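/- For bounded linear operators A on H and B on K, w(A ⊗ B) ≥ (1/2)‖A‖‖B‖ + (1/4)| ‖A ⊗ B + i A* ⊗ B*‖ − ‖A ⊗ B − i A* ⊗ B*‖ |. -/

import Mathlib

open ContinuousLinearMap

/-- Numerical radius: `w(T) = sup { |⟨Tx,x⟩| : ‖x‖ = 1 }`. -/
noncomputable def nrad {E : Type*} [NormedAddCommGroup E] [InnerProductSpace ℂ E]
    (T : E →L[ℂ] E) : ℝ :=
  ⨆ x : {x : E // ‖x‖ = 1}, ‖(inner ℂ (T x.1) x.1 : ℂ)‖

/-- `tmul` realizes `E` as the Hilbert tensor product of `H` and `K`: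
the inner ℂ product is multiplicative on elementary tensors and elementary
tensors span a dense subspace. -/
structure IsHilbertTensorMap
    {H K E : Type*} [NormedAddCommGroup H] [InnerProductSpace ℂ H]
    [NormedAddCommGroup K] [InnerProductSpace ℂ K]
    [NormedAddCommGroup E] [InnerProductSpace ℂ E]
    (tmul : H →ₗ[ℂ] K →ₗ[ℂ] E) : Prop where
  inner_tmul : ∀ (x z : H) (y w : K),
    (inner ℂ (tmul x y) (tmul z w) : ℂ) = (inner ℂ x z : ℂ) * (inner ℂ y w : ℂ)
  dense_span :
    Dense ((Submodule.span ℂ (Set.range fun p : H × K => tmul p.1 p.2) : Submodule ℂ E) : Set E)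

/-- `T` is the tensor product operator `A ⊗ B`, i.e. `T (x ⊗ y) = A x ⊗ B y`. -/
def IsTensorOp {H K E : Type*} [NormedAddCommGroup H] [InnerProductSpace ℂ H]
    [NormedAddCommGroup K] [InnerProductSpace ℂ K]
    [NormedAddCommGroup E] [InnerProductSpace ℂ E]
    (tmul : H →ₗ[ℂ] K →ₗ[ℂ] E)
    (A : H →L[ℂ] H) (B : K →L[ℂ] K) (T : E →L[ℂ] E) : Prop :=
  ∀ (x : H) (y : K), T (tmul x y) = tmul (A x) (B y)

section aux
variable {E : Type*} [NormedAddCommGroup E] [InnerProductSpace ℂ E] [CompleteSpace E]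

set_option linter.unusedSectionVars false

lemma nrad_nonneg (T : E →L[ℂ] E) : 0 ≤ nrad T :=
  Real.iSup_nonneg fun _ => norm_nonneg _

lemma inner_le_nrad (T : E →L[ℂ] E) (x : E) (hx : ‖x‖ = 1) :
    ‖(inner ℂ (T x) x : ℂ)‖ ≤ nrad T := by
  have hbdd : BddAbove (Set.range fun x : {x : E // ‖x‖ = 1} => ‖(inner ℂ (T x.1) x.1 : ℂ)‖) := by
    refine ⟨‖T‖, ?_⟩
    rintro _ ⟨y, rfl⟩
    calc ‖(inner ℂ (T y.1) y.1 : ℂ)‖ ≤ ‖T y.1‖ * ‖y.1‖ := norm_inner_le_norm _ _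
      _ ≤ (‖T‖ * ‖y.1‖) * ‖y.1‖ := by gcongr; exact T.le_opNorm _
      _ = ‖T‖ := by rw [y.2]; ring
  exact le_ciSup hbdd ⟨x, hx⟩

/-- self-adjoint norm bound via polarization -/
lemma sa_norm_le (R : E →L[ℂ] E) (hR : adjoint R = R) {M : ℝ} (hM : 0 ≤ M)
    (h : ∀ x : E, ‖x‖ = 1 → ‖(inner ℂ (R x) x : ℂ)‖ ≤ M) : ‖R‖ ≤ M := by
  have h' : ∀ x : E, ‖(inner ℂ (R x) x : ℂ)‖ ≤ M * ‖x‖ ^ 2 := by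
    intro x
    rcases eq_or_ne x 0 with rfl | hx0
    · simp
    have hxn : ‖x‖ ≠ 0 := norm_ne_zero_iff.mpr hx0
    set u : E := ((‖x‖ : ℂ))⁻¹ • x with hu
    have hun : ‖u‖ = 1 := by
      rw [hu, norm_smul]
      simp [norm_inv, hxn]
    have hxu : x = ((‖x‖ : ℂ)) • u := by
      rw [hu, smul_smul]
      rw [mul_inv_cancel₀ (by exact_mod_cast hxn), one_smul]
    have hinner : (inner ℂ (R x) x : ℂ) = ((‖x‖ : ℂ))^2 * inner ℂ (R u) u := by
      conv_lhs => rw [hxu]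
      rw [map_smul, inner_smul_left, inner_smul_right]
      simp [Complex.conj_ofReal]
      ring
    rw [hinner, norm_mul]
    have h1 : ‖((‖x‖:ℂ))^2‖ = ‖x‖^2 := by
      rw [norm_pow, Complex.norm_real, norm_norm]
    rw [h1, mul_comm]
    gcongr
    exact h u hun
  apply opNorm_le_bound _ hM
  intro x
  rcases eq_or_ne (R x) 0 with h0 | h0
  · simp [h0, mul_nonneg hM (norm_nonneg x)]
  rcases eq_or_ne x 0 with rfl | hx0
  · simp at h0
  have hRx : (0:ℝ) < ‖R x‖ := norm_pos_iff.mpr h0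
  have hx : (0:ℝ) < ‖x‖ := norm_pos_iff.mpr hx0
  set y : E := ((‖x‖ / ‖R x‖ : ℝ) : ℂ) • R x with hy
  have hyn : ‖y‖ = ‖x‖ := by
    rw [hy, norm_smul, Complex.norm_real, Real.norm_eq_abs,
      abs_of_pos (div_pos hx hRx)]
    field_simp
  have e2 : (inner ℂ (R y) x : ℂ) = starRingEnd ℂ (inner ℂ (R x) y) := by
    rw [← hR, adjoint_inner_left, inner_conj_symm, hR]
  have e1 : (inner ℂ (R (x+y)) (x+y) : ℂ) - inner ℂ (R (x-y)) (x-y)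
      = 2 * inner ℂ (R x) y + 2 * inner ℂ (R y) x := by
    simp only [map_add, map_sub, inner_add_left, inner_add_right, inner_sub_left,
      inner_sub_right]
    ring
  have twore : ∀ z : ℂ, ((2:ℂ) * z).re = 2 * z.re := fun z => by simp [Complex.mul_re]
  have hre : (inner ℂ (R (x+y)) (x+y) : ℂ).re - (inner ℂ (R (x-y)) (x-y) : ℂ).re
      = 4 * (inner ℂ (R x) y : ℂ).re := by
    have h4 := congrArg Complex.re e1
    rw [e2, Complex.sub_re, Complex.add_re, twore, twore, Complex.conj_re] at h4
    rw [h4]; ring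
  have hval : (inner ℂ (R x) y : ℂ).re = ‖x‖ * ‖R x‖ := by
    have hre2 : (inner ℂ (R x) (R x) : ℂ).re = ‖R x‖^2 := by
      have := @inner_self_eq_norm_sq ℂ _ _ _ _ (R x)
      simpa using this
    have him2 : (inner ℂ (R x) (R x) : ℂ).im = 0 := by
      rw [← RCLike.im_to_complex]
      exact inner_self_im _
    rw [hy, inner_smul_right, Complex.mul_re, Complex.ofReal_re, Complex.ofReal_im, hre2, him2]
    field_simp
    ring
  have hb1 : (inner ℂ (R (x+y)) (x+y) : ℂ).re ≤ M * (‖x+y‖ * ‖x+y‖) := by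
    calc (inner ℂ (R (x+y)) (x+y) : ℂ).re ≤ ‖(inner ℂ (R (x+y)) (x+y) : ℂ)‖ := Complex.re_le_norm _
      _ ≤ M * ‖x+y‖^2 := h' _
      _ = M * (‖x+y‖ * ‖x+y‖) := by ring
  have hb2 : -(inner ℂ (R (x-y)) (x-y) : ℂ).re ≤ M * (‖x-y‖ * ‖x-y‖) := by
    calc -(inner ℂ (R (x-y)) (x-y) : ℂ).re ≤ |(inner ℂ (R (x-y)) (x-y) : ℂ).re| := neg_le_abs _
      _ ≤ ‖(inner ℂ (R (x-y)) (x-y) : ℂ)‖ := Complex.abs_re_le_norm _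
      _ ≤ M * ‖x-y‖^2 := h' _
      _ = M * (‖x-y‖ * ‖x-y‖) := by ring
  have hpar : ‖x+y‖ * ‖x+y‖ + ‖x-y‖ * ‖x-y‖ = 2 * (‖x‖*‖x‖ + ‖y‖*‖y‖) :=
    by have := parallelogram_law_with_norm ℂ x y; simpa only [sq] using this
  have hpar' : M * (‖x+y‖ * ‖x+y‖) + M * (‖x-y‖ * ‖x-y‖) = 4 * M * (‖x‖ * ‖x‖) := by
    rw [hyn] at hpar
    linear_combination M * hpar
  have key : 4 * (‖x‖ * ‖R x‖) ≤ 4 * M * (‖x‖ * ‖x‖) := by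
    rw [hval] at hre
    linarith [hb1, hb2, hre, hpar']
  nlinarith [key, hx]

lemma mu_bound (T : E →L[ℂ] E) (μ : ℂ) (hμ : ‖μ‖ = 1) :
    ‖T + μ • adjoint T‖ ≤ 2 * nrad T := by
  obtain ⟨l, hl⟩ := IsAlgClosed.exists_pow_nat_eq μ (n := 2) two_pos
  have hln : ‖l‖ = 1 := by
    have h2 : ‖l‖ ^ 2 = 1 := by rw [← norm_pow, hl, hμ]
    nlinarith [norm_nonneg l]
  have hcl : starRingEnd ℂ l * l = 1 := by
    calc starRingEnd ℂ l * l = l * starRingEnd ℂ l := mul_comm _ _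
      _ = ((Complex.normSq l : ℝ) : ℂ) := (Complex.mul_conj l)
      _ = 1 := by
          rw [Complex.normSq_eq_norm_sq, hln]
          norm_num
  have hconj : starRingEnd ℂ l * μ = l := by
    rw [← hl, pow_two, ← mul_assoc, hcl, one_mul]
  have hconj2 : l * starRingEnd ℂ μ = starRingEnd ℂ l := by
    have := congrArg (starRingEnd ℂ) hconj
    simpa [map_mul, mul_comm] using this
  set S := T + μ • adjoint T with hS
  set R := (starRingEnd ℂ l) • S with hRdef
  have hadj : adjoint R = R := by
    rw [hRdef, hS]
    rw [LinearIsometryEquiv.map_smulₛₗ (adjoint : (E →L[ℂ] E) ≃ₗᵢ⋆[ℂ] (E →L[ℂ] E))]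
    rw [map_add, LinearIsometryEquiv.map_smulₛₗ (adjoint : (E →L[ℂ] E) ≃ₗᵢ⋆[ℂ] (E →L[ℂ] E)),
      adjoint_adjoint]
    simp only [RingHom.id_apply, RingHomInvPair.comp_apply_eq, smul_add, smul_smul]
    rw [hconj, hconj2]
    abel
  have hRS : ‖R‖ = ‖S‖ := by
    rw [hRdef, norm_smul, RCLike.norm_conj, hln, one_mul]
  have hb : ∀ x : E, ‖x‖ = 1 → ‖(inner ℂ (R x) x : ℂ)‖ ≤ 2 * nrad T := by
    intro x hx
    have h1 : (inner ℂ (R x) x : ℂ) = l * (inner ℂ (S x) x : ℂ) := by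
      rw [hRdef]
      rw [ContinuousLinearMap.smul_apply, inner_smul_left, starRingEnd_self_apply]
    have h2 : (inner ℂ (S x) x : ℂ)
        = (inner ℂ (T x) x : ℂ) + starRingEnd ℂ μ * (inner ℂ x (T x) : ℂ) := by
      rw [hS, ContinuousLinearMap.add_apply, ContinuousLinearMap.smul_apply, inner_add_left,
        inner_smul_left, adjoint_inner_left]
    calc ‖(inner ℂ (R x) x : ℂ)‖ = ‖l‖ * ‖(inner ℂ (S x) x : ℂ)‖ := by rw [h1, norm_mul]
      _ = ‖(inner ℂ (S x) x : ℂ)‖ := by rw [hln, one_mul]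
      _ ≤ ‖(inner ℂ (T x) x : ℂ)‖
          + ‖starRingEnd ℂ μ * (inner ℂ x (T x) : ℂ)‖ := by
            rw [h2]; exact norm_add_le _ _
      _ = 2 * ‖(inner ℂ (T x) x : ℂ)‖ := by
            rw [norm_mul, RCLike.norm_conj, hμ, norm_inner_symm]; ring
      _ ≤ 2 * nrad T := by have := inner_le_nrad T x hx; linarith
  have hfin : ‖R‖ ≤ 2 * nrad T :=
    sa_norm_le R hadj (by nlinarith [nrad_nonneg T]) hb
  rw [← hRS]
  exact hfin

section tensor
variable {H K : Type*} [NormedAddCommGroup H] [InnerProductSpace ℂ H]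
  [NormedAddCommGroup K] [InnerProductSpace ℂ K]

lemma inner_self_re' {F : Type*} [NormedAddCommGroup F] [InnerProductSpace ℂ F] (v : F) :
    (inner ℂ v v : ℂ).re = ‖v‖ ^ 2 := by
  have := @inner_self_eq_norm_sq ℂ _ _ _ _ v
  simpa using this

lemma inner_self_im'' {F : Type*} [NormedAddCommGroup F] [InnerProductSpace ℂ F] (v : F) :
    (inner ℂ v v : ℂ).im = 0 := by
  rw [← RCLike.im_to_complex]
  exact inner_self_im _

lemma norm_tmul' (tmul : H →ₗ[ℂ] K →ₗ[ℂ] E)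
    (h : ∀ (x z : H) (y w : K),
      (inner ℂ (tmul x y) (tmul z w) : ℂ) = (inner ℂ x z : ℂ) * (inner ℂ y w : ℂ))
    (x : H) (y : K) : ‖tmul x y‖ = ‖x‖ * ‖y‖ := by
  have e := congrArg Complex.re (h x x y y)
  rw [Complex.mul_re, inner_self_re', inner_self_re', inner_self_re', inner_self_im''] at e
  have h3 : ‖tmul x y‖ ^ 2 = (‖x‖ * ‖y‖) ^ 2 := by
    rw [e]; ring
  rw [← Real.sqrt_sq (norm_nonneg (tmul x y)),
    ← Real.sqrt_sq (mul_nonneg (norm_nonneg x) (norm_nonneg y)), h3]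

lemma opAB_le (tmul : H →ₗ[ℂ] K →ₗ[ℂ] E)
    (h : ∀ (x z : H) (y w : K),
      (inner ℂ (tmul x y) (tmul z w) : ℂ) = (inner ℂ x z : ℂ) * (inner ℂ y w : ℂ))
    (A : H →L[ℂ] H) (B : K →L[ℂ] K) (T : E →L[ℂ] E)
    (hT : ∀ (x : H) (y : K), T (tmul x y) = tmul (A x) (B y)) :
    ‖A‖ * ‖B‖ ≤ ‖T‖ := by
  have hxy : ∀ (x : H) (y : K), ‖A x‖ * ‖B y‖ ≤ ‖T‖ * (‖x‖ * ‖y‖) := by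
    intro x y
    have h1 := T.le_opNorm (tmul x y)
    rw [hT x y, norm_tmul' tmul h, norm_tmul' tmul h] at h1
    exact h1
  have h1 : ∀ y : K, ‖A‖ * ‖B y‖ ≤ ‖T‖ * ‖y‖ := by
    intro y
    rcases eq_or_ne (B y) 0 with h0 | h0
    · rw [h0, norm_zero, mul_zero]
      positivity
    have hBy : (0:ℝ) < ‖B y‖ := norm_pos_iff.mpr h0
    have hA : ‖A‖ ≤ (‖T‖ * ‖y‖) / ‖B y‖ := by
      refine ContinuousLinearMap.opNorm_le_bound _ (by positivity) fun x => ?_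
      rw [div_mul_eq_mul_div, le_div_iff₀ hBy]
      calc ‖A x‖ * ‖B y‖ ≤ ‖T‖ * (‖x‖ * ‖y‖) := hxy x y
        _ = ‖T‖ * ‖y‖ * ‖x‖ := by ring
    calc ‖A‖ * ‖B y‖ ≤ ((‖T‖ * ‖y‖) / ‖B y‖) * ‖B y‖ :=
          mul_le_mul_of_nonneg_right hA hBy.le
      _ = ‖T‖ * ‖y‖ := div_mul_cancel₀ _ hBy.ne'
  rcases eq_or_ne ‖A‖ 0 with hA0 | hA0
  · rw [hA0, zero_mul]
    exact norm_nonneg T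
  have hA : (0:ℝ) < ‖A‖ := lt_of_le_of_ne (norm_nonneg A) (Ne.symm hA0)
  have hB : ‖B‖ ≤ ‖T‖ / ‖A‖ := by
    refine ContinuousLinearMap.opNorm_le_bound _ (by positivity) fun y => ?_
    rw [div_mul_eq_mul_div, le_div_iff₀ hA]
    calc ‖B y‖ * ‖A‖ = ‖A‖ * ‖B y‖ := mul_comm _ _
      _ ≤ ‖T‖ * ‖y‖ := h1 y
  calc ‖A‖ * ‖B‖ ≤ ‖A‖ * (‖T‖ / ‖A‖) := mul_le_mul_of_nonneg_left hB hA.le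
    _ = ‖T‖ := by field_simp

end tensor

end aux

theorem stmt11
    {H K E : Type*} [NormedAddCommGroup H] [InnerProductSpace ℂ H] [CompleteSpace H]
    [NormedAddCommGroup K] [InnerProductSpace ℂ K] [CompleteSpace K]
    [NormedAddCommGroup E] [InnerProductSpace ℂ E] [CompleteSpace E]
    (tmul : H →ₗ[ℂ] K →ₗ[ℂ] E) (htmul : IsHilbertTensorMap tmul)
    (A : H →L[ℂ] H) (B : K →L[ℂ] K) (T : E →L[ℂ] E)
    (hT : IsTensorOp tmul A B T) :
    (1 / 2) * (‖A‖ * ‖B‖) +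
      (1 / 4) * |‖T + Complex.I • ContinuousLinearMap.adjoint T‖ -
        ‖T - Complex.I • ContinuousLinearMap.adjoint T‖| ≤ nrad T := by
  have hN : ‖A‖ * ‖B‖ ≤ ‖T‖ := opAB_le tmul htmul.inner_tmul A B T hT
  have ha : ‖T + Complex.I • adjoint T‖ ≤ 2 * nrad T :=
    mu_bound T Complex.I (by simp)
  have hsub : T - Complex.I • adjoint T = T + (-Complex.I) • adjoint T := by
    rw [neg_smul, ← sub_eq_add_neg]
  have hb : ‖T - Complex.I • adjoint T‖ ≤ 2 * nrad T := by
    rw [hsub]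
    exact mu_bound T (-Complex.I) (by simp)
  have h2T : (T + Complex.I • adjoint T) + (T - Complex.I • adjoint T) = (2:ℂ) • T := by
    ext x
    simp only [ContinuousLinearMap.add_apply, ContinuousLinearMap.sub_apply,
      ContinuousLinearMap.smul_apply, two_smul]
    abel
  have hsum : 2 * ‖T‖ ≤ ‖T + Complex.I • adjoint T‖ + ‖T - Complex.I • adjoint T‖ := by
    have := norm_add_le (T + Complex.I • adjoint T) (T - Complex.I • adjoint T)
    rw [h2T, norm_smul] at this
    simpa using this
  rcases abs_cases (‖T + Complex.I • adjoint T‖ - ‖T - Complex.I • adjoint T‖) with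
    ⟨h, _⟩ | ⟨h, _⟩ <;> rw [h] <;> linarith
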